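/- arXiv:1312.2829 — 3 statements merged into one kernel-verified Lean document; each statement's English description precedes it below -/
import Mathlib

section
/- Let (T, W) be a well-founded tree-decomposition of a graph G, let ≤' be a total well-ordering of V(T) extending the tree order, and for a vertex x define m(x) to be the ≤'-least node t with x ∈ W(t). If t0 is a node and b ∈ W(t0), then m(b) ≤ t0 in the tree order. -/
universe u

def TreeInf (T : Type u) [PartialOrder T] (inf : T → T → T) : Prop :=
  ∀ t1 t2 : T, inf t1 t2 ≤ t1 ∧ inf t1 t2 ≤ t2 ∧ ∀ s : T, s ≤ t1 → s ≤ t2 → s ≤ inf t1 t2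

def WFTree (T : Type u) [PartialOrder T] (inf : T → T → T) : Prop :=
  Nonempty T ∧ TreeInf T inf ∧
    ∀ t : T, IsWellOrder {t' : T // t' < t} (fun a b => a.1 < b.1)

/-- `T[t1,t2] = {t : t ≥ inf{t1,t2} and (t ≤ t1 or t ≤ t2)}`. -/
def treeInterval {T : Type u} [PartialOrder T] (inf : T → T → T) (t1 t2 : T) : Set T :=
  {t | inf t1 t2 ≤ t ∧ (t ≤ t1 ∨ t ≤ t2)}

/-- A well-founded tree-decomposition of the graph `G`, with bags `W`. -/
def WFTreeDecomp {V T : Type u} [PartialOrder T] (inf : T → T → T)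
    (G : SimpleGraph V) (W : T → Set V) : Prop :=
  WFTree T inf ∧
  -- (W1): every vertex lies in some bag, every edge lies in some single bag
  (∀ v : V, ∃ t : T, v ∈ W t) ∧
  (∀ u v : V, G.Adj u v → ∃ t : T, u ∈ W t ∧ v ∈ W t) ∧
  -- (W2)
  (∀ t1 t2 t' : T, t' ∈ treeInterval inf t1 t2 → W t1 ∩ W t2 ⊆ W t') ∧
  -- (W3)
  (∀ C : Set T, C.Nonempty → IsChain (· ≤ ·) C → ∀ c : T, IsLUB C c →
    (⋂ t ∈ C, W t) ⊆ W c)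

/-- If `(T, W)` is a well-founded tree-decomposition of `G`, `r` is a total well-ordering
of `T` extending the tree order, `mb` is the `r`-least node whose bag contains `b`, and
`b ∈ W t0`, then `mb ≤ t0` in the tree order. -/
theorem min_bag_le_of_mem {V T : Type u} [PartialOrder T]
    (inf : T → T → T) (G : SimpleGraph V) (W : T → Set V)
    (hdec : WFTreeDecomp inf G W)
    (r : T → T → Prop) (hr : IsWellOrder T r) (hext : ∀ a b : T, a < b → r a b)
    (b : V) (mb : T) (hmem : b ∈ W mb) (hmin : ∀ t : T, b ∈ W t → ¬ r t mb)
    (t0 : T) (hb0 : b ∈ W t0) :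
    mb ≤ t0 := by
  obtain ⟨⟨_, hinf, _⟩, _, _, hW2, _⟩ := hdec
  obtain ⟨h1, h2, _⟩ := hinf mb t0
  have hi : b ∈ W (inf mb t0) :=
    hW2 mb t0 (inf mb t0) ⟨le_refl _, Or.inl h1⟩ ⟨hmem, hb0⟩
  have : inf mb t0 = mb := by
    rcases lt_or_eq_of_le h1 with h | h
    · exact absurd (hext _ _ h) (hmin _ hi)
    · exact h
  exact this ▸ h2
end

section
/- If a graph G admits a well-founded tree-decomposition (T, W) such that |W(t)| < κ for every node t, where κ is an infinite cardinal, then G has a proper coloring with fewer than or equal to κ colors, i.e., the chromatic number of G is at most κ. -/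
universe u

/-- If `G` admits a well-founded tree-decomposition all of whose bags have cardinality
less than the infinite cardinal `κ`, then `G` has a proper coloring with at most `κ`
colors. -/
theorem coloring_of_small_bags {V T : Type u} [PartialOrder T]
    (inf : T → T → T) (G : SimpleGraph V) (W : T → Set V)
    (hdec : WFTreeDecomp inf G W)
    (κ : Cardinal.{u}) (hκ : Cardinal.aleph0 ≤ κ)
    (hsmall : ∀ t : T, Cardinal.mk (W t) < κ) :
    ∃ c : V → κ.out, ∀ u v : V, G.Adj u v → c u ≠ c v := by
  obtain ⟨⟨-, hinf, hwo⟩, hW1, hW1e, hW2, -⟩ := hdec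
  -- < on T is well-founded
  have hwf : WellFounded ((· < ·) : T → T → Prop) := by
    constructor
    intro t
    haveI := hwo t
    have wfsub : WellFounded (fun a b : {t' : T // t' < t} => a.1 < b.1) :=
      IsWellFounded.wf
    have key : ∀ x : {t' : T // t' < t}, Acc ((· < ·) : T → T → Prop) x.1 := by
      intro x
      refine wfsub.induction (C := fun x => Acc ((· < ·) : T → T → Prop) x.1) x ?_
      intro y ih
      constructor
      intro z hz
      exact ih ⟨z, lt_trans hz y.2⟩ hz
    constructor
    intro y hy
    exact key ⟨y, hy⟩
  -- comparability of elements below a common bound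
  have hcomp : ∀ {a b t : T}, a ≤ t → b ≤ t → a ≤ b ∨ b ≤ a := by
    intro a b t ha hb
    rcases eq_or_lt_of_le ha with rfl | ha'
    · right; exact hb
    rcases eq_or_lt_of_le hb with rfl | hb'
    · left; exact ha
    haveI := hwo t
    rcases @trichotomous _ (fun p q : {t' : T // t' < t} => p.1 < q.1) _
        ⟨a, ha'⟩ ⟨b, hb'⟩ with h | h | h
    · exact Or.inl (le_of_lt h)
    · exact Or.inl (le_of_eq (congrArg Subtype.val h))
    · exact Or.inr (le_of_lt h)
  -- each vertex has a minimum bag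
  have hhome : ∀ v : V, ∃ h : T, v ∈ W h ∧ ∀ t : T, v ∈ W t → h ≤ t := by
    intro v
    have hmin0 : hwf.min {t | v ∈ W t} (hW1 v) ∈ {t | v ∈ W t} := hwf.min_mem _ _
    refine ⟨hwf.min {t | v ∈ W t} (hW1 v), hmin0, ?_⟩
    intro t ht
    have hmin : v ∈ W (hwf.min {t | v ∈ W t} (hW1 v)) := hmin0
    set m := hwf.min {t | v ∈ W t} (hW1 v) with hm
    have h1 : inf m t ≤ m := (hinf m t).1
    have h2 : inf m t ≤ t := (hinf m t).2.1
    have hmem : v ∈ W (inf m t) := by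
      refine hW2 m t (inf m t) ⟨le_refl _, Or.inl h1⟩ ⟨hmin, ht⟩
    have : ¬ inf m t < m := hwf.not_lt_min _ hmem
    have heq : inf m t = m := by
      rcases eq_or_lt_of_le h1 with h | h
      · exact h
      · exact absurd h this
    calc m = inf m t := heq.symm
      _ ≤ t := h2
  choose home hhome1 hhome2 using hhome
  -- infinite color type
  haveI : Infinite κ.out := Cardinal.infinite_iff.mpr (by rw [Cardinal.mk_out]; exact hκ)
  -- existence of a good coloring at each node given colorings at smaller nodes
  have exists_good : ∀ (t : T) (prev : ∀ s, s < t → ({v : V // home v = s} → κ.out)),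
      ∃ h : {v : V // home v = t} → κ.out, Function.Injective h ∧
        ∀ (u : V) (hu : u ∈ W t) (hlt : home u < t) (x : {v : V // home v = t}),
          h x ≠ prev (home u) hlt ⟨u, rfl⟩ := by
    intro t prev
    set S : Set κ.out :=
      {c | ∃ (u : V) (hu : u ∈ W t) (hlt : home u < t), c = prev (home u) hlt ⟨u, rfl⟩} with hS
    have hSsub : S ⊆ Set.range
        (fun u : {u : V // u ∈ W t ∧ home u < t} => prev (home u.1) u.2.2 ⟨u.1, rfl⟩) := by
      rintro c ⟨u, hu, hlt, rfl⟩
      exact ⟨⟨u, hu, hlt⟩, rfl⟩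
    have hB : Cardinal.mk {u : V // u ∈ W t ∧ home u < t} ≤ Cardinal.mk (W t) := by
      refine Cardinal.mk_le_of_injective
        (f := fun u : {u : V // u ∈ W t ∧ home u < t} => (⟨u.1, u.2.1⟩ : W t)) ?_
      intro a b hab
      have := congrArg Subtype.val hab
      exact Subtype.ext this
    have hScard : Cardinal.mk S < κ :=
      lt_of_le_of_lt ((Cardinal.mk_le_mk_of_subset hSsub).trans
        ((Cardinal.mk_range_le).trans hB)) (hsmall t)
    have hcompl : Cardinal.mk (↥Sᶜ) = κ := by
      rw [Cardinal.mk_compl_of_infinite S (by rw [Cardinal.mk_out]; exact hScard),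
        Cardinal.mk_out]
    have hVt : Cardinal.mk {v : V // home v = t} < κ := by
      refine lt_of_le_of_lt (Cardinal.mk_le_of_injective
        (f := fun x : {v : V // home v = t} =>
          (⟨x.1, by have h := hhome1 x.1; rwa [x.2] at h⟩ : W t)) ?_) (hsmall t)
      intro a b hab
      have := congrArg Subtype.val hab
      exact Subtype.ext this
    obtain ⟨e⟩ : Nonempty ({v : V // home v = t} ↪ ↥Sᶜ) :=
      Cardinal.le_def _ _ |>.mp (le_of_lt (hVt.trans_eq hcompl.symm))
    refine ⟨fun x => (e x).1, ?_, ?_⟩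
    · intro a b hab
      exact e.injective (Subtype.ext hab)
    · intro u hu hlt x hcon
      exact (e x).2 ⟨u, hu, hlt, hcon⟩
  set F : ∀ t : T, (∀ s, s < t → ({v : V // home v = s} → κ.out)) →
      ({v : V // home v = t} → κ.out) :=
    fun t prev => (exists_good t prev).choose with hF
  set g : ∀ t : T, {v : V // home v = t} → κ.out := hwf.fix F with hgdef
  have hgspec : ∀ t : T, Function.Injective (g t) ∧
      ∀ (u : V) (hu : u ∈ W t) (hlt : home u < t) (x : {v : V // home v = t}),
        g t x ≠ g (home u) ⟨u, rfl⟩ := by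
    intro t
    have heq : g t = F t (fun s _ => g s) := by
      rw [hgdef]; exact hwf.fix_eq F t
    rw [heq]
    exact (exists_good t (fun s _ => g s)).choose_spec
  have key : ∀ (w : V) (s : T) (hw : home w = s),
      g (home w) ⟨w, rfl⟩ = g s ⟨w, hw⟩ := by
    intro w s hw; subst hw; rfl
  refine ⟨fun v => g (home v) ⟨v, rfl⟩, ?_⟩
  intro u v hadj
  obtain ⟨t, hu, hv⟩ := hW1e u v hadj
  have hut : home u ≤ t := hhome2 u t hu
  have hvt : home v ≤ t := hhome2 v t hv
  have main : ∀ (a b : V), G.Adj a b → ∀ (s : T), a ∈ W s → b ∈ W s →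
      home a ≤ home b → home b ≤ s → g (home a) ⟨a, rfl⟩ ≠ g (home b) ⟨b, rfl⟩ := by
    intro a b hab s has hbs hle hbt
    rcases eq_or_lt_of_le hle with heq | hlt
    · rw [key a (home b) heq]
      intro hcon
      exact G.ne_of_adj hab (congrArg Subtype.val ((hgspec (home b)).1 hcon))
    · have haW : a ∈ W (home b) := by
        refine hW2 (home a) s (home b)
          ⟨le_trans (hinf (home a) s).1 (le_of_lt hlt), Or.inr hbt⟩ ⟨hhome1 a, has⟩
      exact fun hcon => (hgspec (home b)).2 a haW hlt ⟨b, rfl⟩ hcon.symm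
  rcases hcomp hut hvt with hle | hle
  · exact main u v hadj t hu hv hle hvt
  · exact fun hcon => main v u hadj.symm t hv hu hle hut hcon.symm
end

section
/- Let G be a graph, κ an infinite cardinal, (T, W) a well-founded tree-decomposition of G with all bags of cardinality < κ, and let ≤' be a total well-ordering of V(T) extending the tree order. Define m(x) as the ≤'-least node with x ∈ W(t), fix injections φ_t : W(t) → |W(t)| for each t, and well-order V(G) by x ≤ y iff m(x) <' m(y) or (m(x) = m(y) and φ_{m(x)}(x) ≤ φ_{m(y)}(y)). Then the function f : V(G) → κ defined by transfinite recursion f(x) = min(κ \ {f(z) : z < x and z ∈ W(m(x))}) is well-defined and injective on every bag W(t0). -/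
universe u

/-- The coloring recursion: given a well-founded tree-decomposition with bags of size
`< κ` (`κ` infinite), a total well-ordering `r` of `T` extending the tree order,
the map `m` sending each vertex to the `r`-least node whose bag contains it, and
injections `φ t : W t → |W t|`, order the vertices lexicographically by
`(m x, φ (m x) x)`.  Then the function `f` defined by transfinite recursion
`f x = min (κ \ {f z : z < x and z ∈ W (m x)})` is well-defined and injective on
every bag. -/
theorem recursion_coloring_injective_on_bags {V T : Type u} [PartialOrder T]
    (inf : T → T → T) (G : SimpleGraph V) (W : T → Set V)
    (hdec : WFTreeDecomp inf G W)
    (κ : Cardinal.{u}) (hκ : Cardinal.aleph0 ≤ κ)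
    (hsmall : ∀ t : T, Cardinal.mk (W t) < κ)
    (r : T → T → Prop) (hr : IsWellOrder T r) (hext : ∀ s t : T, s < t → r s t)
    (m : V → T) (hm : ∀ x : V, x ∈ W (m x)) (hmin : ∀ x : V, ∀ t : T, x ∈ W t → ¬ r t (m x))
    (φ : T → V → Ordinal.{u})
    (hφinj : ∀ t : T, Set.InjOn (φ t) (W t))
    (hφlt : ∀ t : T, ∀ x ∈ W t, φ t x < (Cardinal.mk (W t)).ord) :
    ∃ f : V → Ordinal.{u},
      (∀ x : V, IsLeast
        {γ : Ordinal.{u} | γ < κ.ord ∧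
          ∀ z : V, (r (m z) (m x) ∨ (m z = m x ∧ φ (m z) z < φ (m x) x)) →
            z ∈ W (m x) → f z ≠ γ}
        (f x)) ∧
      ∀ t0 : T, Set.InjOn f (W t0) := by
  obtain ⟨⟨_, hinf, hwo⟩, _, _, hW2, _⟩ := hdec
  set prec : V → V → Prop := fun z x =>
    r (m z) (m x) ∨ (m z = m x ∧ φ (m z) z < φ (m x) x) with hprec
  have wfprec : WellFounded prec := by
    have h1 : WellFounded (Prod.Lex r ((· < ·) : Ordinal.{u} → Ordinal.{u} → Prop)) :=
      hr.wf.prod_lex Ordinal.lt_wf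
    have h2 := InvImage.wf (fun x : V => (m x, φ (m x) x)) h1
    apply Subrelation.wf ?_ h2
    rintro z x (h | ⟨h1, h2⟩)
    · exact Prod.Lex.left _ _ h
    · exact Prod.lex_def.mpr (Or.inr ⟨h1, h2⟩)
  -- m y ≤ t whenever y ∈ W t
  have hle : ∀ (y : V) (t : T), y ∈ W t → m y ≤ t := by
    intro y t hyt
    have hi : inf t (m y) ∈ treeInterval inf t (m y) :=
      ⟨le_refl _, Or.inl (hinf t (m y)).1⟩
    have hy' : y ∈ W (inf t (m y)) := hW2 t (m y) _ hi ⟨hyt, hm y⟩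
    have h1 : inf t (m y) ≤ m y := (hinf t (m y)).2.1
    rcases h1.lt_or_eq with h | h
    · exact absurd (hext _ _ h) (hmin y _ hy')
    · exact h ▸ (hinf t (m y)).1
  -- the recursion
  let F : ∀ x : V, (∀ z, prec z x → Ordinal.{u}) → Ordinal.{u} := fun x g =>
    sInf {γ : Ordinal.{u} | γ < κ.ord ∧ ∀ z, ∀ h : prec z x, z ∈ W (m x) → g z h ≠ γ}
  let f : V → Ordinal.{u} := wfprec.fix F
  have hfeq : ∀ x : V, f x =
      sInf {γ : Ordinal.{u} | γ < κ.ord ∧ ∀ z, prec z x → z ∈ W (m x) → f z ≠ γ} := by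
    intro x
    exact wfprec.fix_eq F x
  -- nonemptiness
  have hne : ∀ x : V,
      {γ : Ordinal.{u} | γ < κ.ord ∧ ∀ z, prec z x → z ∈ W (m x) → f z ≠ γ}.Nonempty := by
    intro x
    by_contra hemp
    rw [Set.not_nonempty_iff_eq_empty] at hemp
    have hsub : Set.Iio κ.ord ⊆ f '' (W (m x)) := by
      intro γ hγ
      by_contra hno
      have : γ ∈ ({γ : Ordinal.{u} | γ < κ.ord ∧ ∀ z, prec z x → z ∈ W (m x) → f z ≠ γ} :
          Set Ordinal.{u}) := by
        refine ⟨hγ, fun z _ hz hfz => hno ⟨z, hz, hfz⟩⟩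
      rw [hemp] at this
      exact this
    have h1 : Cardinal.lift.{u+1} κ ≤ Cardinal.mk (f '' (W (m x))) := by
      have := Ordinal.mk_Iio_ordinal κ.ord
      rw [Cardinal.card_ord] at this
      rw [← this]
      exact Cardinal.mk_le_mk_of_subset hsub
    have h2 : Cardinal.mk (f '' (W (m x))) ≤ Cardinal.lift.{u+1} (Cardinal.mk (W (m x))) := by
      have := Cardinal.mk_image_le_lift (f := f) (s := (W (m x) : Set V))
      rwa [Cardinal.lift_id'.{u, u+1}] at this
    have := (h1.trans h2)
    rw [Cardinal.lift_le] at this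
    exact absurd (lt_of_le_of_lt this (hsmall (m x))) (lt_irrefl _)
  have hleast : ∀ x : V, IsLeast
      {γ : Ordinal.{u} | γ < κ.ord ∧ ∀ z, prec z x → z ∈ W (m x) → f z ≠ γ} (f x) := by
    intro x
    rw [hfeq x]
    exact ⟨csInf_mem (hne x), fun b hb => csInf_le' hb⟩
  refine ⟨f, hleast, ?_⟩
  -- injectivity on bags
  have key : ∀ (t0 : T) (x y : V), x ∈ W t0 → y ∈ W t0 → prec x y → f x ≠ f y := by
    intro t0 x y hx hy hxy
    -- m x ≤ m y
    have hmx : m x ≤ t0 := hle x t0 hx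
    have hmy : m y ≤ t0 := hle y t0 hy
    have hcomp : m x ≤ m y ∨ m y ≤ m x := by
      rcases hmx.lt_or_eq with h1 | h1
      · rcases hmy.lt_or_eq with h2 | h2
        · rcases @trichotomous _ _ (hwo t0).toTrichotomous ⟨m x, h1⟩ ⟨m y, h2⟩ with
            h | h | h
          · exact Or.inl h.le
          · exact Or.inl (le_of_eq (congrArg Subtype.val h))
          · exact Or.inr h.le
        · exact Or.inl (h2 ▸ hmx)
      · exact Or.inr (h1 ▸ hmy)
    have hmxy : m x ≤ m y := by
      rcases hcomp with h | h
      · exact h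
      · rcases h.lt_or_eq with h | h
        · exfalso
          rcases hxy with h' | ⟨h', _⟩
          · haveI := hr; exact asymm h' (hext _ _ h)
          · exact absurd h' (ne_of_gt h)
        · exact le_of_eq h.symm
    -- x ∈ W (m y)
    have hxWmy : x ∈ W (m y) := by
      have hint : m y ∈ treeInterval inf t0 (m x) :=
        ⟨(hinf t0 (m x)).2.1.trans hmxy, Or.inl hmy⟩
      exact hW2 t0 (m x) (m y) hint ⟨hx, hm x⟩
    exact (hleast y).1.2 x hxy hxWmy
  intro t0 x hx y hy hfxy
  by_contra hne'
  have htri : prec x y ∨ prec y x := by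
    rcases @trichotomous _ r hr.toTrichotomous (m x) (m y) with h | h | h
    · exact Or.inl (Or.inl h)
    · have hφne : φ (m x) x ≠ φ (m y) y := by
        rw [← h]
        intro hE
        exact hne' (hφinj (m x) (hm x) (h ▸ hm y) hE)
      rcases lt_or_gt_of_ne hφne with h' | h'
      · exact Or.inl (Or.inr ⟨h, h'⟩)
      · exact Or.inr (Or.inr ⟨h.symm, h'⟩)
    · exact Or.inr (Or.inl h)
  rcases htri with h | h
  · exact key t0 x y hx hy h hfxy
  · exact key t0 y x hy hx h hfxy.symm
end
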